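/- Let $F \in K[x_0,\dots,x_n]$ be a nonzero homogeneous polynomial of degree $d$ over an algebraically closed field $K$. Then the set $L = \{p \in \mathbb{A}^{n+1} : \mathrm{mult}_p F \ge d\}$ of points where $F$ has multiplicity equal to its degree is a linear subspace of $\mathbb{A}^{n+1}$. -/

import Mathlib

open MvPolynomial

/-- The multiplicity of `F` at `p` is at least `d`: every monomial appearing in
the Taylor expansion of `F` at `p` (i.e., in `F(X + p)`) has total degree `≥ d`. -/
def multGE {K : Type*} [CommRing K] {σ : Type*}
    (F : MvPolynomial σ K) (p : σ → K) (d : ℕ) : Prop :=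
  ∀ u ∈ ((bind₁ fun i : σ => (X i : MvPolynomial σ K) + C (p i)) F).support,
    d ≤ u.sum fun _ e => e

section Aux

variable {K : Type*} [Field K] {σ : Type*} [DecidableEq σ]

private lemma deg_sum_eq (u : σ →₀ ℕ) : (u.sum fun _ e => e) = u.degree := rfl

private lemma deg_add (a b : σ →₀ ℕ) : (a + b).degree = a.degree + b.degree := by
  simp only [Finsupp.degree_eq_weight_one, map_add]

private lemma deg_single (a : σ) (b : ℕ) : (Finsupp.single a b).degree = b := by
  rcases eq_or_ne b 0 with rfl | hb
  · simp [Finsupp.degree]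
  · rw [Finsupp.degree_apply, Finsupp.support_single_ne_zero _ hb, Finset.sum_singleton,
      Finsupp.single_eq_same]

/-- degree bound for shifted monomial -/
private lemma shift_monomial_totalDegree (p : σ → K) (u : σ →₀ ℕ) (c : K) :
    ((bind₁ fun i : σ => (X i : MvPolynomial σ K) + C (p i)) (monomial u c)).totalDegree
      ≤ u.degree := by
  rw [bind₁_monomial]
  refine le_trans (totalDegree_mul _ _) ?_
  rw [totalDegree_C, zero_add]
  refine le_trans (totalDegree_finset_prod _ _) ?_
  rw [Finsupp.degree]
  refine Finset.sum_le_sum fun i _ => ?_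
  refine le_trans (totalDegree_pow _ _) ?_
  have h1 : ((X i : MvPolynomial σ K) + C (p i)).totalDegree ≤ 1 := by
    refine le_trans (totalDegree_add _ _) ?_
    simp [totalDegree_X, totalDegree_C]
  calc u i * ((X i : MvPolynomial σ K) + C (p i)).totalDegree ≤ u i * 1 :=
        Nat.mul_le_mul_left _ h1
    _ = u i := mul_one _

private lemma coeff_X_add_C_pow (a : σ) (r : K) (b : ℕ) (w : σ →₀ ℕ) (hw : b ≤ w.degree) :
    coeff w (((X a : MvPolynomial σ K) + C r) ^ b) = coeff w ((X a : MvPolynomial σ K) ^ b) := by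
  rw [add_pow, coeff_sum]
  rw [Finset.sum_eq_single_of_mem b (Finset.self_mem_range_succ b)]
  · simp
  · intro k hk hkb
    have hk' : k < b := lt_of_le_of_ne (Nat.lt_succ_iff.mp (Finset.mem_range.mp hk)) hkb
    apply coeff_eq_zero_of_totalDegree_lt
    have hdeg : ((X a : MvPolynomial σ K) ^ k * C r ^ (b - k) * (b.choose k : MvPolynomial σ K)).totalDegree ≤ k := by
      refine le_trans (totalDegree_mul _ _) ?_
      have h1 : ((X a : MvPolynomial σ K) ^ k * C r ^ (b - k)).totalDegree ≤ k := by
        refine le_trans (totalDegree_mul _ _) ?_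
        rw [totalDegree_X_pow, ← C_pow, totalDegree_C]
        omega
      have h2 : ((b.choose k : MvPolynomial σ K)).totalDegree = 0 := by
        rw [← C_eq_coe_nat, totalDegree_C]
      omega
    have : (w.sum fun _ e => e) = ∑ i ∈ w.support, w i := rfl
    calc ((X a : MvPolynomial σ K) ^ k * C r ^ (b - k) * (b.choose k : MvPolynomial σ K)).totalDegree
        ≤ k := hdeg
      _ < b := hk'
      _ ≤ ∑ i ∈ w.support, w i := hw

private lemma coeff_shift_monomial (p : σ → K) (u : σ →₀ ℕ) :
    ∀ (c : K) (v : σ →₀ ℕ), u.degree ≤ v.degree →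
      coeff v ((bind₁ fun i : σ => (X i : MvPolynomial σ K) + C (p i)) (monomial u c))
        = coeff v (monomial u c) := by
  induction u using Finsupp.induction with
  | zero => intro c v _; simp [monomial_zero', bind₁_C_right]
  | single_add a b u' ha' hb IH =>
    intro c v hv
    have hmon : (monomial (Finsupp.single a b + u') c : MvPolynomial σ K)
        = (X a : MvPolynomial σ K) ^ b * monomial u' c := by
      rw [X_pow_eq_monomial, monomial_mul, one_mul]
    rw [hmon, map_mul, map_pow, bind₁_X_right]
    rw [deg_add, deg_single] at hv
    rw [coeff_mul, coeff_mul]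
    refine Finset.sum_congr rfl fun x hx => ?_
    have hxy : x.1 + x.2 = v := Finset.HasAntidiagonal.mem_antidiagonal.mp hx
    have hdeg : x.1.degree + x.2.degree = v.degree := by rw [← deg_add, hxy]
    by_cases h1 : b ≤ x.1.degree
    · by_cases h2 : u'.degree ≤ x.2.degree
      · rw [coeff_X_add_C_pow _ _ _ _ h1, IH c x.2 h2]
      · -- x.2.degree < u'.degree, so x.1.degree > b
        have hx1 : b < x.1.degree := by omega
        have hz1 : coeff x.1 (((X a : MvPolynomial σ K) + C (p a)) ^ b) = 0 := by
          apply coeff_eq_zero_of_totalDegree_lt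
          have : (((X a : MvPolynomial σ K) + C (p a)) ^ b).totalDegree ≤ b := by
            refine le_trans (totalDegree_pow _ _) ?_
            have : ((X a : MvPolynomial σ K) + C (p a)).totalDegree ≤ 1 := by
              refine le_trans (totalDegree_add _ _) ?_
              simp [totalDegree_X, totalDegree_C]
            calc b * ((X a : MvPolynomial σ K) + C (p a)).totalDegree ≤ b * 1 :=
                  Nat.mul_le_mul_left _ this
              _ = b := mul_one _
          calc (((X a : MvPolynomial σ K) + C (p a)) ^ b).totalDegree ≤ b := this
            _ < ∑ i ∈ x.1.support, x.1 i := hx1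
        have hz2 : coeff x.1 ((X a : MvPolynomial σ K) ^ b) = 0 := by
          rw [coeff_X_pow, if_neg]
          intro h
          rw [← h, deg_single] at hx1
          omega
        rw [hz1, hz2, zero_mul, zero_mul]
    · -- x.1.degree < b, so x.2.degree > u'.degree
      have hx2 : u'.degree < x.2.degree := by omega
      have hz1 : coeff x.2 ((bind₁ fun i : σ => (X i : MvPolynomial σ K) + C (p i))
          (monomial u' c)) = 0 := by
        apply coeff_eq_zero_of_totalDegree_lt
        calc ((bind₁ fun i : σ => (X i : MvPolynomial σ K) + C (p i))
              (monomial u' c)).totalDegree ≤ u'.degree := shift_monomial_totalDegree p u' c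
          _ < ∑ i ∈ x.2.support, x.2 i := hx2
      have hz2 : coeff x.2 (monomial u' c : MvPolynomial σ K) = 0 := by
        rw [coeff_monomial, if_neg]
        intro h
        rw [h] at hx2
        omega
      rw [hz1, hz2, mul_zero, mul_zero]

/-- key lemma: for homogeneous `F` of degree `d`, the shift doesn't change coefficients in
degrees `≥ d`. -/
private lemma coeff_shift_of_isHomogeneous (p : σ → K) {F : MvPolynomial σ K} {d : ℕ}
    (hhom : F.IsHomogeneous d) (v : σ →₀ ℕ) (hv : d ≤ v.degree) :
    coeff v ((bind₁ fun i : σ => (X i : MvPolynomial σ K) + C (p i)) F) = coeff v F := by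
  conv_lhs => rw [F.as_sum]
  conv_rhs => rw [F.as_sum]
  rw [map_sum, coeff_sum, coeff_sum]
  refine Finset.sum_congr rfl fun u hu => ?_
  apply coeff_shift_monomial
  have := hhom (mem_support_iff.mp hu)
  have hdeg : u.degree = d := by rw [Finsupp.degree_eq_weight_one]; exact this
  omega

/-- `multGE F p d` is equivalent to invariance of `F` under the shift by `p`. -/
private lemma multGE_iff {F : MvPolynomial σ K} {d : ℕ} (hhom : F.IsHomogeneous d) (p : σ → K) :
    multGE F p d ↔ (bind₁ fun i : σ => (X i : MvPolynomial σ K) + C (p i)) F = F := by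
  constructor
  · intro h
    apply MvPolynomial.ext
    intro v
    by_cases hv : d ≤ v.degree
    · exact coeff_shift_of_isHomogeneous p hhom v hv
    · have h1 : coeff v ((bind₁ fun i : σ => (X i : MvPolynomial σ K) + C (p i)) F) = 0 := by
        by_contra hc
        have := h v (mem_support_iff.mpr hc)
        rw [deg_sum_eq] at this
        exact hv this
      have h2 : coeff v F = 0 := by
        apply hhom.coeff_eq_zero
        omega
      rw [h1, h2]
  · intro h u hu
    rw [h] at hu
    have := hhom (mem_support_iff.mp hu)
    rw [deg_sum_eq]
    have : u.degree = d := by rw [Finsupp.degree_eq_weight_one]; exact this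
    omega

/-- scaling property of homogeneous polynomials under `bind₁` -/
private lemma bind₁_smul_of_isHomogeneous {F : MvPolynomial σ K} {d : ℕ}
    (hhom : F.IsHomogeneous d) (c : K) (g : σ → MvPolynomial σ K) :
    (bind₁ fun i : σ => C c * g i) F = C (c ^ d) * bind₁ g F := by
  conv_lhs => rw [F.as_sum]
  conv_rhs => rw [F.as_sum]
  rw [map_sum, map_sum, Finset.mul_sum]
  refine Finset.sum_congr rfl fun u hu => ?_
  rw [bind₁_monomial, bind₁_monomial]
  have hdeg : ∑ i ∈ u.support, u i = d := by
    have := hhom (mem_support_iff.mp hu)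
    have h := (Finsupp.degree_eq_weight_one (σ := σ) (R := ℕ)) ▸ this
    rw [← h]; rfl
  calc C (coeff u F) * ∏ i ∈ u.support, (C c * g i) ^ u i
      = C (coeff u F) * ((∏ i ∈ u.support, (C c) ^ u i) * ∏ i ∈ u.support, g i ^ u i) := by
        rw [← Finset.prod_mul_distrib]
        congr 1
        refine Finset.prod_congr rfl fun i _ => ?_
        rw [mul_pow]
    _ = C (c ^ d) * (C (coeff u F) * ∏ i ∈ u.support, g i ^ u i) := by
        rw [Finset.prod_pow_eq_pow_sum, hdeg, ← C_pow]
        ring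

end Aux

/-- Bézout-type fact (proof of Theorem 3.5): for a nonzero homogeneous `F` of
degree `d` over an algebraically closed field, the locus
`L = {p ∈ 𝔸^{n+1} : mult_p F ≥ d}` is a linear subspace. -/
theorem stmt8 (K : Type*) [Field K] [IsAlgClosed K] (n d : ℕ)
    (F : MvPolynomial (Fin (n + 1)) K) (hF : F ≠ 0)
    (hhom : F.IsHomogeneous d) :
    ∃ W : Submodule K (Fin (n + 1) → K),
      {p : Fin (n + 1) → K | multGE F p d} = (W : Set (Fin (n + 1) → K)) := by
  classical
  -- invariance under zero shift
  have hshift0 : ∀ (p : Fin (n + 1) → K), p = 0 →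
      (bind₁ fun i : Fin (n + 1) => (X i : MvPolynomial (Fin (n + 1)) K) + C (p i)) F = F := by
    intro p hp
    subst hp
    have : (fun i : Fin (n + 1) => (X i : MvPolynomial (Fin (n + 1)) K) + C ((0 : Fin (n + 1) → K) i)) = X := by
      funext i; simp
    rw [this]
    simp [bind₁_X_left]
  refine ⟨{
    carrier := {p : Fin (n + 1) → K | multGE F p d}
    zero_mem' := by
      rw [Set.mem_setOf_eq, multGE_iff hhom]
      exact hshift0 0 rfl
    add_mem' := by
      intro p q hp hq
      rw [Set.mem_setOf_eq, multGE_iff hhom] at hp hq ⊢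
      have hcomp : (bind₁ fun i : Fin (n + 1) => (X i : MvPolynomial (Fin (n + 1)) K) + C ((p + q) i)) F
          = (bind₁ fun i : Fin (n + 1) => (X i : MvPolynomial (Fin (n + 1)) K) + C (q i))
            ((bind₁ fun i : Fin (n + 1) => (X i : MvPolynomial (Fin (n + 1)) K) + C (p i)) F) := by
        rw [bind₁_bind₁]
        refine congrArg (fun g => (bind₁ g) F) ?_
        funext i
        simp only [map_add, bind₁_X_right, bind₁_C_right, Pi.add_apply]
        ring
      rw [hcomp, hp, hq]
    smul_mem' := by
      intro c p hp
      rw [Set.mem_setOf_eq, multGE_iff hhom] at hp ⊢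
      rcases eq_or_ne c 0 with rfl | hc
      · exact hshift0 _ (by simp)
      -- apply the scaling map `X i ↦ c * X i` to both sides
      have key : (bind₁ fun i : Fin (n + 1) => C c * X i)
          ((bind₁ fun i : Fin (n + 1) => (X i : MvPolynomial (Fin (n + 1)) K) + C ((c • p) i)) F)
          = (bind₁ fun i : Fin (n + 1) => C c * X i) F := by
        rw [bind₁_bind₁]
        have h1 : (fun i : Fin (n + 1) => (bind₁ fun i : Fin (n + 1) => C c * X i)
            ((X i : MvPolynomial (Fin (n + 1)) K) + C ((c • p) i)))
            = fun i : Fin (n + 1) => C c * ((X i : MvPolynomial (Fin (n + 1)) K) + C (p i)) := by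
          funext i
          simp only [map_add, bind₁_X_right, bind₁_C_right, Pi.smul_apply, smul_eq_mul, map_mul]
          ring
        rw [h1, bind₁_smul_of_isHomogeneous hhom c, hp,
          bind₁_smul_of_isHomogeneous hhom c X]
        congr 1
        have : (bind₁ (X : Fin (n + 1) → MvPolynomial (Fin (n + 1)) K)) F = F := by simp [bind₁_X_left]
        rw [this]
      -- cancel the scaling map using its inverse `X i ↦ c⁻¹ * X i`
      have inj : ∀ A : MvPolynomial (Fin (n + 1)) K,
          (bind₁ fun i : Fin (n + 1) => C c⁻¹ * X i) ((bind₁ fun i : Fin (n + 1) => C c * X i) A) = A := by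
        intro A
        rw [bind₁_bind₁]
        have h2 : (fun i : Fin (n + 1) => (bind₁ fun i : Fin (n + 1) => C c⁻¹ * X i) (C c * (X i : MvPolynomial (Fin (n + 1)) K)))
            = X := by
          funext i
          simp only [map_mul, bind₁_C_right, bind₁_X_right]
          rw [← mul_assoc, ← C_mul, mul_inv_cancel₀ hc, C_1, one_mul]
        rw [h2]
        simp [bind₁_X_left]
      have := congrArg (bind₁ fun i : Fin (n + 1) => C c⁻¹ * X i) key
      rwa [inj, inj] at this
  }, rfl⟩
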